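/- The random injection σ driving the infinite q-shuffle is almost surely a bijection of ℕ: with probability 1, every positive integer m equals σ(j) for some j ∈ ℕ. -/

import Mathlib

open MeasureTheory ProbabilityTheory
open scoped ENNReal

/-- The first `j` values `σ(0), …, σ(j-1)` of the infinite `q`-shuffle permutation driven by
the (0-indexed) geometric choices `x`: at step `j`, the `x j`-th smallest natural number not
chosen so far is appended. -/
noncomputable def shufflePrefix (x : ℕ → ℕ) : ℕ → List ℕ
  | 0 => []
  | j + 1 => shufflePrefix x j ++ [Nat.nth (fun m => m ∉ shufflePrefix x j) (x j)]

/-- The random injection `σ : ℕ → ℕ` driving the infinite `q`-shuffle: `σ(j)` is the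
`x j`-th smallest (0-indexed) natural number not in `{σ(0), …, σ(j-1)}`. -/
noncomputable def shuffleSeq (x : ℕ → ℕ) (j : ℕ) : ℕ :=
  Nat.nth (fun m => m ∉ shufflePrefix x j) (x j)

lemma shufflePrefix_congr {x y : ℕ → ℕ} : ∀ n : ℕ, (∀ j < n, x j = y j) →
    shufflePrefix x n = shufflePrefix y n
  | 0, _ => rfl
  | n + 1, h => by
    have ih := shufflePrefix_congr n (fun j hj => h j (Nat.lt_succ_of_lt hj))
    simp only [shufflePrefix, ih, h n (Nat.lt_succ_self n)]

lemma shufflePrefix_infinite (x : ℕ → ℕ) (n : ℕ) :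
    {m | m ∉ shufflePrefix x n}.Infinite := by
  have h : {m | m ∈ shufflePrefix x n}.Finite := List.finite_toSet _
  have := h.infinite_compl
  simpa [Set.compl_setOf] using this

lemma mem_shufflePrefix_succ (x : ℕ → ℕ) (n m : ℕ) :
    m ∈ shufflePrefix x (n + 1) ↔
      m ∈ shufflePrefix x n ∨ Nat.nth (fun k => k ∉ shufflePrefix x n) (x n) = m := by
  simp [shufflePrefix, eq_comm]

lemma not_mem_shufflePrefix_succ_iff (x : ℕ → ℕ) (n m : ℕ)
    (hm : m ∉ shufflePrefix x n) :
    m ∉ shufflePrefix x (n + 1) ↔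
      x n ≠ Nat.count (fun k => k ∉ shufflePrefix x n) m := by
  rw [mem_shufflePrefix_succ]
  constructor
  · intro h hx
    apply h
    right
    rw [hx]
    exact Nat.nth_count hm
  · rintro h (h' | h')
    · exact hm h'
    · apply h
      have hinj := Nat.nth_injective (p := fun k => k ∉ shufflePrefix x n)
        (shufflePrefix_infinite x n)
      have : Nat.nth (fun k => k ∉ shufflePrefix x n)
          (Nat.count (fun k => k ∉ shufflePrefix x n) m) = m := Nat.nth_count hm
      exact hinj (h'.trans this.symm)

lemma exists_shuffleSeq_of_mem (x : ℕ → ℕ) : ∀ n m : ℕ, m ∈ shufflePrefix x n →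
    ∃ j, shuffleSeq x j = m
  | 0, m, h => absurd h List.not_mem_nil
  | n + 1, m, h => by
    rcases (mem_shufflePrefix_succ x n m).1 h with h | h
    · exact exists_shuffleSeq_of_mem x n m h
    · exact ⟨n, h⟩

lemma key_bound (q : ℝ) (hq0 : 0 < q) (hq1 : q < 1)
    (Ω : Type*) [MeasurableSpace Ω] (P : Measure Ω) [IsProbabilityMeasure P]
    (ξ : ℕ → Ω → ℕ) (hmeas : ∀ j, Measurable (ξ j))
    (hindep : iIndepFun ξ P)
    (hgeom : ∀ j i : ℕ, P {ω | ξ j ω = i} = ENNReal.ofReal ((1 - q) * q ^ i))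
    (m : ℕ) : ∀ n : ℕ,
    P {ω | m ∉ shufflePrefix (fun t => ξ t ω) n} ≤
      (1 - ENNReal.ofReal ((1 - q) * q ^ m)) ^ n := by
  set c : ℝ≥0∞ := ENNReal.ofReal ((1 - q) * q ^ m) with hc
  have hpre : ∀ j i : ℕ, P (ξ j ⁻¹' {i}) = ENNReal.ofReal ((1 - q) * q ^ i) := by
    intro j i
    have : ξ j ⁻¹' {i} = {ω | ξ j ω = i} := by ext ω; simp [Set.mem_preimage]
    rw [this, hgeom]
  intro n
  induction n with
  | zero =>
    simp [shufflePrefix]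
  | succ n ih =>
    classical
    -- setup
    set ext : (Fin n → ℕ) → ℕ → ℕ := fun v j => if h : j < n then v ⟨j, h⟩ else 0 with hext
    set Cond : (Fin n → ℕ) → Prop := fun v => m ∉ shufflePrefix (ext v) n with hCond
    set E : (Fin n → ℕ) → Set Ω := fun v => ⋂ j ∈ Finset.range n, ξ j ⁻¹' {ext v j} with hE
    set kk : (Fin n → ℕ) → ℕ :=
      fun v => Nat.count (fun a => a ∉ shufflePrefix (ext v) n) m with hkk
    set C : (Fin n → ℕ) → Set Ω := fun v => ξ n ⁻¹' {kk v} with hCset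
    have measE : ∀ v, MeasurableSet (E v) := fun v =>
      MeasurableSet.biInter (Finset.range n).countable_toSet
        (fun j _ => (hmeas j) (measurableSet_singleton _))
    have measC : ∀ v, MeasurableSet (C v) := fun v => (hmeas n) (measurableSet_singleton _)
    -- basic facts about ext and prefixes
    have extAgree : ∀ (ω : Ω) (j : ℕ), j < n → ext (fun i : Fin n => ξ i ω) j = ξ j ω := by
      intro ω j hj; simp [hext, hj]
    have prefEq : ∀ (ω : Ω), (∀ j < n, ξ j ω = ext (fun i : Fin n => ξ i ω) j) := by
      intro ω j hj; exact (extAgree ω j hj).symm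
    have memE_prefix : ∀ (v : Fin n → ℕ) (ω : Ω), ω ∈ E v →
        shufflePrefix (fun t => ξ t ω) n = shufflePrefix (ext v) n := by
      intro v ω hω
      apply shufflePrefix_congr
      intro j hj
      have := Set.mem_iInter₂.1 hω j (Finset.mem_range.mpr hj)
      simpa [Set.mem_preimage] using this
    have self_memE : ∀ ω : Ω, ω ∈ E (fun i : Fin n => ξ i ω) := by
      intro ω
      apply Set.mem_iInter₂.2
      intro j hj
      simp [Set.mem_preimage, extAgree ω j (Finset.mem_range.mp hj)]
    -- Claim 1
    have claim1 : {ω | m ∉ shufflePrefix (fun t => ξ t ω) n} =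
        ⋃ v : {v : Fin n → ℕ // Cond v}, E v.1 := by
      ext ω
      simp only [Set.mem_setOf_eq, Set.mem_iUnion]
      constructor
      · intro hω
        refine ⟨⟨fun i : Fin n => ξ i ω, ?_⟩, self_memE ω⟩
        have hp := memE_prefix (fun i : Fin n => ξ i ω) ω (self_memE ω)
        show m ∉ shufflePrefix (ext fun i : Fin n => ξ i ω) n
        rw [← hp]
        exact hω
      · rintro ⟨⟨v, hv⟩, hωv⟩
        rw [memE_prefix v ω hωv]
        exact hv
    -- Claim 2
    have claim2 : {ω | m ∉ shufflePrefix (fun t => ξ t ω) (n + 1)} =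
        ⋃ v : {v : Fin n → ℕ // Cond v}, (E v.1 \ C v.1) := by
      ext ω
      simp only [Set.mem_setOf_eq, Set.mem_iUnion]
      constructor
      · intro hω
        have hωn : m ∉ shufflePrefix (fun t => ξ t ω) n := by
          intro h
          exact hω ((mem_shufflePrefix_succ _ n m).2 (Or.inl h))
        refine ⟨⟨fun i : Fin n => ξ i ω, ?_⟩, self_memE ω, ?_⟩
        · have hp := memE_prefix (fun i : Fin n => ξ i ω) ω (self_memE ω)
          show m ∉ shufflePrefix (ext fun i : Fin n => ξ i ω) n
          rw [← hp]; exact hωn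
        · have hiff := (not_mem_shufflePrefix_succ_iff (fun t => ξ t ω) n m hωn).1 hω
          intro hmem
          apply hiff
          have hp := memE_prefix (fun i : Fin n => ξ i ω) ω (self_memE ω)
          have : kk (fun i : Fin n => ξ i ω) =
              Nat.count (fun k => k ∉ shufflePrefix (fun t => ξ t ω) n) m := by
            simp only [hkk, hp]
          rw [← this]
          simpa [hCset, Set.mem_preimage] using hmem
      · rintro ⟨⟨v, hv⟩, hωv, hωc⟩
        have hp := memE_prefix v ω hωv
        have hωn : m ∉ shufflePrefix (fun t => ξ t ω) n := by rw [hp]; exact hv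
        rw [not_mem_shufflePrefix_succ_iff (fun t => ξ t ω) n m hωn]
        intro hx
        apply hωc
        simp only [hCset, Set.mem_preimage, Set.mem_singleton_iff, hkk, ← hp]
        exact hx
    -- disjointness
    have eq_of_E : ∀ v w : Fin n → ℕ, (E v ∩ E w).Nonempty → v = w := by
      intro v w ⟨ω, hv, hw⟩
      funext i
      have h1 := Set.mem_iInter₂.1 hv i.1 (Finset.mem_range.mpr i.2)
      have h2 := Set.mem_iInter₂.1 hw i.1 (Finset.mem_range.mpr i.2)
      simp only [Set.mem_preimage, Set.mem_singleton_iff] at h1 h2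
      have hv' : ext v i.1 = v i := by simp [hext, i.2]
      have hw' : ext w i.1 = w i := by simp [hext, i.2]
      rw [← hv', ← hw', ← h1, ← h2]
    have disjE : Pairwise (Function.onFun Disjoint
        (fun v : {v : Fin n → ℕ // Cond v} => E v.1)) := by
      intro v w hvw
      rw [Function.onFun, Set.disjoint_left]
      intro ω hωv hωw
      exact hvw (Subtype.ext (eq_of_E v.1 w.1 ⟨ω, hωv, hωw⟩))
    have disjD : Pairwise (Function.onFun Disjoint
        (fun v : {v : Fin n → ℕ // Cond v} => E v.1 \ C v.1)) := by
      intro v w hvw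
      exact Disjoint.mono Set.diff_subset Set.diff_subset (disjE hvw)
    -- measure computations
    have hEmeasure : ∀ v : Fin n → ℕ,
        P (E v) = ∏ j ∈ Finset.range n, P (ξ j ⁻¹' {ext v j}) := by
      intro v
      exact hindep.measure_inter_preimage_eq_mul (Finset.range n)
        (sets := fun j => {ext v j}) (fun i _ => measurableSet_singleton _)
    have hECmeasure : ∀ v : Fin n → ℕ, P (E v ∩ C v) = P (E v) * P (C v) := by
      intro v
      have h := hindep.measure_inter_preimage_eq_mul (Finset.range (n + 1))
        (sets := fun j => if j = n then ({kk v} : Set ℕ) else {ext v j})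
        (fun i _ => by split <;> exact measurableSet_singleton _)
      rw [Finset.range_add_one] at h
      rw [Finset.set_biInter_insert, Finset.prod_insert (Finset.notMem_range_self)] at h
      have hset : (⋂ j ∈ Finset.range n,
          ξ j ⁻¹' (if j = n then ({kk v} : Set ℕ) else {ext v j})) = E v := by
        apply Set.iInter₂_congr
        intro j hj
        rw [if_neg (Nat.ne_of_lt (Finset.mem_range.mp hj))]
      have hprod : (∏ j ∈ Finset.range n,
          P (ξ j ⁻¹' (if j = n then ({kk v} : Set ℕ) else {ext v j}))) = P (E v) := by
        rw [hEmeasure v]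
        apply Finset.prod_congr rfl
        intro j hj
        rw [if_neg (Nat.ne_of_lt (Finset.mem_range.mp hj))]
      beta_reduce at h
      rw [hset, if_pos rfl, hprod] at h
      rw [Set.inter_comm] at h
      rw [h, mul_comm]
    have hkk_le : ∀ v : Fin n → ℕ, kk v ≤ m := by
      intro v
      simp only [hkk]
      apply Nat.count_le
    have hcle : ∀ v : Fin n → ℕ, c ≤ P (C v) := by
      intro v
      rw [hCset]
      simp only
      rw [hpre n (kk v)]
      apply ENNReal.ofReal_le_ofReal
      apply mul_le_mul_of_nonneg_left _ (by linarith)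
      exact pow_le_pow_of_le_one hq0.le hq1.le (hkk_le v)
    have hdiff_le : ∀ v : Fin n → ℕ, P (E v \ C v) ≤ P (E v) * (1 - c) := by
      intro v
      have hsum := measure_inter_add_diff (μ := P) (E v) (measC v)
      have hdiff : P (E v \ C v) = P (E v) - P (E v) * P (C v) := by
        rw [← hECmeasure v]
        exact ENNReal.eq_sub_of_add_eq (measure_ne_top P _)
          (by rw [add_comm]; exact hsum)
      rw [hdiff]
      have hmulsub : P (E v) * (1 - c) = P (E v) * 1 - P (E v) * c :=
        ENNReal.mul_sub (fun _ _ => measure_ne_top P _)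
      rw [hmulsub, mul_one]
      exact tsub_le_tsub_left (mul_le_mul_right (hcle v) _) _
    -- put it together
    calc P {ω | m ∉ shufflePrefix (fun t => ξ t ω) (n + 1)}
        = ∑' v : {v : Fin n → ℕ // Cond v}, P (E v.1 \ C v.1) := by
          rw [claim2]
          exact measure_iUnion disjD (fun v => (measE v.1).diff (measC v.1))
      _ ≤ ∑' v : {v : Fin n → ℕ // Cond v}, P (E v.1) * (1 - c) :=
          ENNReal.tsum_le_tsum (fun v => hdiff_le v.1)
      _ = (∑' v : {v : Fin n → ℕ // Cond v}, P (E v.1)) * (1 - c) :=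
          ENNReal.tsum_mul_right
      _ = P {ω | m ∉ shufflePrefix (fun t => ξ t ω) n} * (1 - c) := by
          rw [claim1, measure_iUnion disjE (fun v => measE v.1)]
      _ ≤ (1 - c) ^ n * (1 - c) := mul_le_mul_left ih _
      _ = (1 - c) ^ (n + 1) := (pow_succ _ _).symm

/-- the random injection driving the infinite `q`-shuffle is almost surely a
bijection of `ℕ`: with probability 1 every natural number is in its range.  Here
`ξ_0, ξ_1, …` are independent with the (0-indexed) geometric law `P(ξ = i) = (1-q) q^i`. -/
theorem stmt_8 (q : ℝ) (hq0 : 0 < q) (hq1 : q < 1)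
    (Ω : Type*) [MeasurableSpace Ω] (P : Measure Ω) [IsProbabilityMeasure P]
    (ξ : ℕ → Ω → ℕ) (hmeas : ∀ j, Measurable (ξ j))
    (hindep : iIndepFun ξ P)
    (hgeom : ∀ j i : ℕ, P {ω | ξ j ω = i} = ENNReal.ofReal ((1 - q) * q ^ i)) :
    P {ω | ∀ m : ℕ, ∃ j : ℕ, shuffleSeq (fun t => ξ t ω) j = m} = 1 := by
  set T : Set Ω := {ω | ∀ m : ℕ, ∃ j : ℕ, shuffleSeq (fun t => ξ t ω) j = m} with hT
  have hNever : ∀ m : ℕ, P {ω | ∀ j : ℕ, shuffleSeq (fun t => ξ t ω) j ≠ m} = 0 := by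
    intro m
    set c : ℝ≥0∞ := ENNReal.ofReal ((1 - q) * q ^ m) with hc
    have hcpos : c ≠ 0 := by
      rw [hc]
      simp only [ne_eq, ENNReal.ofReal_eq_zero, not_le]
      exact mul_pos (by linarith) (pow_pos hq0 m)
    have hr : (1 : ℝ≥0∞) - c < 1 :=
      ENNReal.sub_lt_self ENNReal.one_ne_top one_ne_zero hcpos
    have hsub : ∀ n : ℕ, {ω | ∀ j : ℕ, shuffleSeq (fun t => ξ t ω) j ≠ m} ⊆
        {ω | m ∉ shufflePrefix (fun t => ξ t ω) n} := by
      intro n ω hω hmem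
      obtain ⟨j, hj⟩ := exists_shuffleSeq_of_mem _ n m hmem
      exact hω j hj
    have hle : ∀ n : ℕ, P {ω | ∀ j : ℕ, shuffleSeq (fun t => ξ t ω) j ≠ m} ≤ (1 - c) ^ n :=
      fun n => le_trans (measure_mono (hsub n))
        (key_bound q hq0 hq1 Ω P ξ hmeas hindep hgeom m n)
    have htend := ENNReal.tendsto_pow_atTop_nhds_zero_of_lt_one hr
    have := ge_of_tendsto' htend hle
    exact le_antisymm this zero_le
  have hcompl : P Tᶜ = 0 := by
    have hsub : Tᶜ ⊆ ⋃ m : ℕ, {ω | ∀ j : ℕ, shuffleSeq (fun t => ξ t ω) j ≠ m} := by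
      intro ω hω
      simp only [hT, Set.mem_compl_iff, Set.mem_setOf_eq, not_forall] at hω
      obtain ⟨m, hm⟩ := hω
      refine Set.mem_iUnion.2 ⟨m, ?_⟩
      intro j hj
      exact hm ⟨j, hj⟩
    refine le_antisymm ?_ zero_le
    calc P Tᶜ ≤ P (⋃ m : ℕ, {ω | ∀ j : ℕ, shuffleSeq (fun t => ξ t ω) j ≠ m}) :=
          measure_mono hsub
      _ ≤ ∑' m : ℕ, P {ω | ∀ j : ℕ, shuffleSeq (fun t => ξ t ω) j ≠ m} := measure_iUnion_le _
      _ = 0 := by simp [hNever]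
  refine le_antisymm prob_le_one ?_
  calc (1 : ℝ≥0∞) = P Set.univ := measure_univ.symm
    _ = P (T ∪ Tᶜ) := by rw [Set.union_compl_self]
    _ ≤ P T + P Tᶜ := measure_union_le _ _
    _ = P T := by rw [hcompl, add_zero]
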